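/- Let M be a multiline queue with a 1-ball at its leftmost bottom row position, with bottom row balls at positions x_1 < ⋯ < x_{r+ℓ} (balls of both kinds) and with 0-balls (occupied balls) forming the set H determined by the ball-drop algorithm. Then for every interval between two consecutive 1-balls at positions a < b, the number of top row balls in (a, j] is at least the number of 0-balls in (a, j] for every a < j ≤ b, with equality at j = b. Consequently, the pair of lattice paths (P_1, P_2) obtained from the bottom and top rows of M (south edge for bottom vacancy, west edge for 0-ball, southwest edge for 1-ball in P_1; southwest for a top vacancy above a 1-ball, west for a top ball, south otherwise in P_2) satisfies: P_2 lies weakly above P_1 and the two paths coincide at every diagonal edge. -/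
import Mathlib


/-- Positions are `1, …, n`. A bottom row ball (position of a 0 or 1 of `X`) at position
`p` is occupied (a 0-ball) under the ball-drop algorithm iff there is some `q < p` such that
`(q, p]` contains at least as many top row balls (elements of `T`) as bottom row balls. -/
def occupiedPos (X : ℕ → Fin 3) (T : Finset ℕ) (p : ℕ) : Prop :=
  ∃ q < p, ((Finset.Ioc q p).filter (fun s => X s ≠ 2)).card
      ≤ (T.filter (fun s => q < s ∧ s ≤ p)).card

/-- `T` (the set of top row ball positions) is a multiline queue of type `X`. -/
def MLQtype (n : ℕ) (X : ℕ → Fin 3) (T : Finset ℕ) : Prop :=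
  T ⊆ Finset.Icc 1 n ∧
  T.card = ((Finset.Icc 1 n).filter (fun p => X p = 0)).card ∧
  ∀ p ∈ Finset.Icc 1 n, (X p = 0 ↔ (X p ≠ 2 ∧ occupiedPos X T p))

private lemma count_split (f : ℕ → Prop) [DecidablePred f] {q r p : ℕ}
    (h1 : q ≤ r) (h2 : r ≤ p) :
    ((Finset.Ioc q p).filter f).card
      = ((Finset.Ioc q r).filter f).card + ((Finset.Ioc r p).filter f).card := by
  rw [← Finset.Ioc_union_Ioc_eq_Ioc h1 h2, Finset.filter_union,
    Finset.card_union_of_disjoint (Finset.disjoint_filter_filter (by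
      rw [Finset.disjoint_left]
      intro s hs hs'
      simp only [Finset.mem_Ioc] at hs hs'
      omega))]

private lemma Tc_eq (T : Finset ℕ) (q p : ℕ) :
    (T.filter (fun s => q < s ∧ s ≤ p)).card
      = ((Finset.Ioc q p).filter (· ∈ T)).card := by
  congr 1
  ext s
  simp only [Finset.mem_filter, Finset.mem_Ioc]
  tauto

private lemma Tc_split (T : Finset ℕ) {q r p : ℕ} (h1 : q ≤ r) (h2 : r ≤ p) :
    (T.filter (fun s => q < s ∧ s ≤ p)).card
      = (T.filter (fun s => q < s ∧ s ≤ r)).card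
        + (T.filter (fun s => r < s ∧ s ≤ p)).card := by
  rw [Tc_eq, Tc_eq, Tc_eq]
  exact count_split _ h1 h2

/-- Let `M` be a multiline queue with a 1-ball at its leftmost bottom row position
(`X 1 = 1`). For any two consecutive 1-balls at positions `a < b` (no 1 strictly between),
the number of top row balls in `(a, j]` is at least the number of 0-balls in `(a, j]` for
every `a < j ≤ b`, with equality at `j = b`. (Consequently the pair of lattice paths read
off the bottom and top rows of `M` is nested: `P₂` lies weakly above `P₁` and the two
paths coincide at every diagonal edge.) -/
theorem mlq_interval_counts (n : ℕ) (X : ℕ → Fin 3) (T : Finset ℕ)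
    (h1 : X 1 = 1) (hM : MLQtype n X T)
    (a b : ℕ) (ha : a ∈ Finset.Icc 1 n) (hb : b ∈ Finset.Icc 1 n) (hab : a < b)
    (hXa : X a = 1) (hXb : X b = 1)
    (hbetween : ∀ j, a < j → j < b → X j ≠ 1) :
    (∀ j, a < j → j ≤ b →
      ((Finset.Ioc a j).filter (fun s => X s = 0)).card
        ≤ (T.filter (fun s => a < s ∧ s ≤ j)).card) ∧
    ((Finset.Ioc a b).filter (fun s => X s = 0)).card
      = (T.filter (fun s => a < s ∧ s ≤ b)).card := by
  obtain ⟨hT, hcard, hiff⟩ := hM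
  obtain ⟨ha1, han⟩ := Finset.mem_Icc.mp ha
  obtain ⟨hb1, hbn⟩ := Finset.mem_Icc.mp hb
  have hX3 : ∀ v : Fin 3, v ≠ 1 → (v = 0 ↔ v ≠ 2) := by decide
  -- a and b are not occupied
  have hnota : ¬ occupiedPos X T a := by
    intro hocc
    have := (hiff a ha).mpr ⟨by rw [hXa]; decide, hocc⟩
    rw [hXa] at this; exact absurd this (by decide)
  have hnotb : ¬ occupiedPos X T b := by
    intro hocc
    have := (hiff b hb).mpr ⟨by rw [hXb]; decide, hocc⟩
    rw [hXb] at this; exact absurd this (by decide)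
  have hamin : ∀ q, q < a →
      (T.filter (fun s => q < s ∧ s ≤ a)).card
        < ((Finset.Ioc q a).filter (fun s => X s ≠ 2)).card := by
    intro q hq
    by_contra h
    push_neg at h
    exact hnota ⟨q, hq, h⟩
  -- key induction: for a ≤ j < b, #balls in (a,j] ≤ #T in (a,j]
  have key : ∀ j, j < b → a ≤ j →
      ((Finset.Ioc a j).filter (fun s => X s ≠ 2)).card
        ≤ (T.filter (fun s => a < s ∧ s ≤ j)).card := by
    intro j
    induction j using Nat.strong_induction_on with
    | _ j IH =>
      intro hjb haj
      rcases eq_or_lt_of_le haj with rfl | haj'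
      · simp
      have hXj1 : X j ≠ 1 := hbetween j haj' hjb
      have hIoc : Finset.Ioc (j - 1) j = {j} := by
        ext s
        simp only [Finset.mem_Ioc, Finset.mem_singleton]
        omega
      have hsBj := count_split (fun s => X s ≠ 2)
        (show a ≤ j - 1 by omega) (show j - 1 ≤ j by omega)
      have hsTj := Tc_split T (show a ≤ j - 1 by omega) (show j - 1 ≤ j by omega)
      have hIHj := IH (j - 1) (by omega) (by omega) (by omega)
      by_cases hXj2 : X j = 2
      · have hB0 : ((Finset.Ioc (j-1) j).filter (fun s => X s ≠ 2)).card = 0 := by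
          rw [hIoc]
          simp [Finset.filter_singleton, hXj2]
        omega
      · have hXj0 : X j = 0 := (hX3 (X j) hXj1).mpr hXj2
        have hocc : occupiedPos X T j :=
          ((hiff j (Finset.mem_Icc.mpr ⟨by omega, by omega⟩)).mp hXj0).2
        obtain ⟨q, hqj, hq⟩ := hocc
        rcases lt_or_ge q a with hqa | haq
        · have hsB := count_split (fun s => X s ≠ 2) hqa.le haj'.le
          have hsT := Tc_split T hqa.le haj'.le
          have := hamin q hqa
          omega
        · have hIHq := IH q hqj (lt_trans hqj hjb) haq
          have hsB := count_split (fun s => X s ≠ 2) haq hqj.le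
          have hsT := Tc_split T haq hqj.le
          omega
  -- counts at b
  have hIocb : Finset.Ioc (b - 1) b = {b} := by
    ext s
    simp only [Finset.mem_Ioc, Finset.mem_singleton]
    omega
  have hsBb := count_split (fun s => X s ≠ 2)
    (show a ≤ b - 1 by omega) (show b - 1 ≤ b by omega)
  have hsTb := Tc_split T (show a ≤ b - 1 by omega) (show b - 1 ≤ b by omega)
  have hB1 : ((Finset.Ioc (b-1) b).filter (fun s => X s ≠ 2)).card = 1 := by
    rw [hIocb]
    simp [Finset.filter_singleton, hXb]
  have hkeyb := key (b - 1) (by omega) (by omega)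
  have hbmin : (T.filter (fun s => a < s ∧ s ≤ b)).card
      < ((Finset.Ioc a b).filter (fun s => X s ≠ 2)).card := by
    by_contra h
    push_neg at h
    exact hnotb ⟨a, hab, h⟩
  -- equality of ball-count and 0-count below b
  have hzeros : ∀ j, j < b →
      (Finset.Ioc a j).filter (fun s => X s = 0)
        = (Finset.Ioc a j).filter (fun s => X s ≠ 2) := by
    intro j hjb
    apply Finset.filter_congr
    intro s hs
    obtain ⟨has, hsj⟩ := Finset.mem_Ioc.mp hs
    have : X s ≠ 1 := hbetween s has (by omega)
    simpa using hX3 (X s) this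
  have hzb : ((Finset.Ioc a b).filter (fun s => X s = 0)).card
      = ((Finset.Ioc a b).filter (fun s => X s ≠ 2)).card - 1 := by
    have hset : (Finset.Ioc a b).filter (fun s => X s = 0)
        = ((Finset.Ioc a b).filter (fun s => X s ≠ 2)).erase b := by
      ext s
      simp only [Finset.mem_filter, Finset.mem_Ioc, Finset.mem_erase]
      constructor
      · rintro ⟨⟨has, hsb⟩, hs0⟩
        refine ⟨?_, ⟨has, hsb⟩, by rw [hs0]; decide⟩
        intro h; rw [h, hXb] at hs0; exact absurd hs0 (by decide)
      · rintro ⟨hsb, ⟨has, hsb'⟩, hs2⟩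
        have hslt : s < b := lt_of_le_of_ne hsb' hsb
        have : X s ≠ 1 := hbetween s has hslt
        exact ⟨⟨has, hsb'⟩, (hX3 (X s) this).mpr hs2⟩
    rw [hset, Finset.card_erase_of_mem]
    simp only [Finset.mem_filter, Finset.mem_Ioc]
    exact ⟨⟨hab, le_refl b⟩, by rw [hXb]; decide⟩
  have heq : ((Finset.Ioc a b).filter (fun s => X s = 0)).card
      = (T.filter (fun s => a < s ∧ s ≤ b)).card := by
    omega
  refine ⟨?_, heq⟩
  intro j haj hjb
  rcases eq_or_lt_of_le hjb with rfl | hjb'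
  · omega
  · rw [hzeros j hjb']
    exact key j hjb' (le_of_lt haj)
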